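/- Let g, h ∈ ℝ^m with g_j > 0 and h_j ≥ c > 0 for all j. Then the KL divergence between the product Poisson distributions satisfies KL(P_g ‖ P_h) ≤ (1/c)·‖g − h‖₂² ≤ (1/c)·‖g − h‖₁². -/
import Mathlib


theorem kl_product_poisson_le_l1_sq {m : ℕ} (g h : Fin m → ℝ) (c : ℝ) (hc : 0 < c)
    (hg : ∀ j, 0 < g j) (hh : ∀ j, c ≤ h j) :
    (∑ j, (g j * Real.log (g j / h j) - g j + h j))
        ≤ (1 / c) * ∑ j, (g j - h j) ^ 2 ∧
    (1 / c) * (∑ j, (g j - h j) ^ 2) ≤ (1 / c) * (∑ j, |g j - h j|) ^ 2 := by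
  constructor
  · rw [Finset.mul_sum]
    refine Finset.sum_le_sum fun j _ => ?_
    have hhj : 0 < h j := lt_of_lt_of_le hc (hh j)
    have h1 : Real.log (g j / h j) ≤ g j / h j - 1 :=
      Real.log_le_sub_one_of_pos (div_pos (hg j) hhj)
    have h2 : g j * Real.log (g j / h j) - g j + h j ≤ (g j - h j) ^ 2 / h j := by
      have := mul_le_mul_of_nonneg_left h1 (hg j).le
      have heq : g j * (g j / h j - 1) - g j + h j = (g j - h j) ^ 2 / h j := by
        field_simp; ring
      nlinarith
    refine h2.trans ?_
    rw [div_le_iff₀ hhj] at *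
    have hsq : 0 ≤ (g j - h j) ^ 2 := sq_nonneg _
    rw [one_div, ← div_eq_inv_mul, div_mul_eq_mul_div, le_div_iff₀ hc]
    nlinarith [hh j]
  · refine mul_le_mul_of_nonneg_left ?_ (by positivity)
    calc ∑ j, (g j - h j) ^ 2 = ∑ j, |g j - h j| ^ 2 := by simp [sq_abs]
      _ ≤ (∑ j, |g j - h j|) ^ 2 :=
        Finset.sum_sq_le_sq_sum_of_nonneg fun i _ => abs_nonneg _
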